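/- There exists N ∈ ℕ such that for all integers n ≥ N divisible by 6, one has Cov(n, n/3) < Cov(n, n/2). -/

import Mathlib

open Real

/-- Binomial coefficient with an integer lower index, with the convention that it
vanishes for negative lower index (and, via `Nat.choose`, above the upper index). -/
def ibinom (a : ℕ) (b : ℤ) : ℕ := if 0 ≤ b then a.choose b.toNat else 0

/-- The fold covariance of k-fold cross-validation of the Majority algorithm on `n`
i.i.d. uniformly random binary labels with fold size `m = n/k`:
`Cov(n, m) = 2^{-n} · Σ_{j=0}^{m-1} binom(m-1, j)² · binom(n-2m, ⌊(n-m)/2⌋ - j)`. -/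
noncomputable def Cov (n m : ℕ) : ℝ :=
  (2 : ℝ)⁻¹ ^ n * ∑ j ∈ Finset.range m,
    ((m - 1).choose j : ℝ) ^ 2 * (ibinom (n - 2 * m) (((n : ℤ) - m) / 2 - j) : ℝ)

section CovProofAux

open Filter Topology MeasureTheory Set Stirling

-- ∑_{i<u} (2i+1) = u²
lemma sum_odds (u : ℕ) : ∑ i ∈ Finset.range u, (2*i+1) = u^2 := by
  induction u with
  | zero => simp
  | succ v ih => rw [Finset.sum_range_succ, ih]; ring

-- product identity: C(2t, t+u) = C(2t,t) * ∏_{i<u} (t-i)/(t+i+1), for u ≤ t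
lemma choose_prod (t u : ℕ) (hu : u ≤ t) :
    (((2*t).choose (t+u) : ℝ)) = ((2*t).choose t : ℝ) *
      ∏ i ∈ Finset.range u, (((t:ℝ) - i) / ((t:ℝ) + i + 1)) := by
  induction u with
  | zero => simp
  | succ v ih =>
    have hv : v ≤ t := by omega
    have key : ((2*t).choose (t+v+1) : ℝ) * ((t:ℝ) + v + 1) =
        ((2*t).choose (t+v) : ℝ) * ((t:ℝ) - v) := by
      have := Nat.choose_succ_right_eq (2*t) (t+v)
      have h2 : 2*t - (t+v) = t - v := by omega
      rw [h2] at this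
      have := congrArg (fun x : ℕ => (x : ℝ)) this
      push_cast [Nat.cast_sub hv] at this
      convert this using 2 <;> push_cast <;> ring
    have hpos : ((t:ℝ) + v + 1) ≠ 0 := by positivity
    rw [Finset.prod_range_succ, ← mul_assoc, ← ih hv, show t + (v+1) = t + v + 1 by omega]
    field_simp
    linarith [key]

-- exponential bound
lemma choose_le_exp (t u : ℕ) (ht : 1 ≤ t) (hu : u ≤ t) :
    ((2*t).choose (t+u) : ℝ) ≤ ((2*t).choose t : ℝ) * Real.exp (-(u:ℝ)^2 / ((t:ℝ)+u)) := by
  rw [choose_prod t u hu]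
  have htu : (0:ℝ) < (t:ℝ) + u := by positivity
  have hfac : ∀ i ∈ Finset.range u, (0:ℝ) ≤ ((t:ℝ) - i) / ((t:ℝ) + i + 1) := by
    intro i hi
    have hit : (i:ℝ) ≤ (t:ℝ) := by
      have : i < u := Finset.mem_range.1 hi
      have : i ≤ t := by omega
      exact_mod_cast this
    exact div_nonneg (by linarith) (by positivity)
  have hbd : ∀ i ∈ Finset.range u, ((t:ℝ) - i) / ((t:ℝ) + i + 1) ≤
      Real.exp (-(2*(i:ℝ)+1) / ((t:ℝ)+u)) := by
    intro i hi
    have hiu : i < u := Finset.mem_range.1 hi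
    have h1 : ((t:ℝ) - i) / ((t:ℝ) + i + 1) = 1 - (2*(i:ℝ)+1)/((t:ℝ)+i+1) := by
      field_simp
      ring
    have h2 : (2*(i:ℝ)+1)/((t:ℝ)+u) ≤ (2*(i:ℝ)+1)/((t:ℝ)+i+1) := by
      apply div_le_div_of_nonneg_left (by positivity) (by positivity)
      have : (i:ℝ) + 1 ≤ (u:ℝ) := by exact_mod_cast hiu
      linarith
    have h3 : 1 - (2*(i:ℝ)+1)/((t:ℝ)+i+1) ≤ 1 - (2*(i:ℝ)+1)/((t:ℝ)+u) := by linarith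
    rw [h1, neg_div]
    refine h3.trans ?_
    have := Real.add_one_le_exp (-((2*(i:ℝ)+1) / ((t:ℝ)+u)))
    linarith
  have := Finset.prod_le_prod hfac hbd
  refine (mul_le_mul_of_nonneg_left this (by positivity)).trans ?_
  rw [← Real.exp_sum]
  apply le_of_eq
  congr 1
  have hc : ∑ x ∈ Finset.range u, (2 * (x:ℝ) + 1) = (u:ℝ) ^ 2 := by
    have := congrArg (fun x : ℕ => (x:ℝ)) (sum_odds u)
    push_cast at this
    exact this
  simp only [neg_div]
  rw [Finset.sum_neg_distrib, ← Finset.sum_div, hc]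



lemma stirlingSeq_eq (n : ℕ) (hn : 1 ≤ n) :
    (Nat.centralBinom n : ℝ) * Real.sqrt n / 4 ^ n = stirlingSeq (2 * n) / stirlingSeq n ^ 2 := by
  have hn' : (0:ℝ) < n := by exact_mod_cast hn
  have hP : (0:ℝ) < ((n:ℝ) / Real.exp 1) ^ n := pow_pos (div_pos hn' (exp_pos 1)) n
  have hS : (0:ℝ) < Real.sqrt n := Real.sqrt_pos.2 hn'
  have hf1 : (0:ℝ) < (n.factorial : ℝ) := by exact_mod_cast n.factorial_pos
  have hcb : (Nat.centralBinom n : ℝ) = ((2*n).factorial : ℝ) / ((n.factorial : ℝ) * (n.factorial : ℝ)) := by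
    rw [Nat.centralBinom, Nat.cast_choose ℝ (by omega : n ≤ 2*n)]
    rw [show 2*n - n = n by omega]
  have h1 : stirlingSeq n = (n.factorial : ℝ) / (Real.sqrt 2 * Real.sqrt n * ((n:ℝ)/Real.exp 1) ^ n) := by
    rw [stirlingSeq, ← Real.sqrt_mul (by norm_num : (0:ℝ) ≤ 2)]
  have h2 : stirlingSeq (2*n) = ((2*n).factorial : ℝ) / (2 * Real.sqrt n * (4 ^ n * (((n:ℝ)/Real.exp 1) ^ n)^2)) := by
    rw [stirlingSeq]
    have e1 : Real.sqrt (2 * ((2*n : ℕ) : ℝ)) = 2 * Real.sqrt n := by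
      push_cast
      rw [show (2:ℝ) * (2 * n) = 4 * n by ring, Real.sqrt_mul (by norm_num : (0:ℝ) ≤ 4),
        show (4:ℝ) = 2^2 by norm_num, Real.sqrt_sq (by norm_num : (0:ℝ) ≤ 2)]
    have e2 : (((2*n : ℕ):ℝ)/Real.exp 1) ^ (2*n) = 4 ^ n * (((n:ℝ)/Real.exp 1) ^ n)^2 := by
      push_cast
      rw [show ((2:ℝ) * n)/Real.exp 1 = 2 * ((n:ℝ)/Real.exp 1) by ring, mul_pow]
      rw [show (2:ℝ)^(2*n) = 4^n by rw [pow_mul]; norm_num]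
      rw [← pow_mul, show n*2 = 2*n by ring]
    rw [e1, e2]
  rw [hcb, h1, h2]
  have h4 : (0:ℝ) < 4 ^ n := by positivity
  have hsq2 : (0:ℝ) < Real.sqrt 2 := by positivity
  field_simp
  ring_nf
  rw [Real.sq_sqrt (by norm_num : (0:ℝ) ≤ 2)]

lemma cb_tendsto : Tendsto (fun n : ℕ => (Nat.centralBinom n : ℝ) * Real.sqrt n / 4 ^ n)
    atTop (nhds (1 / Real.sqrt π)) := by
  have h2n : Tendsto (fun n : ℕ => 2 * n) atTop atTop :=
    tendsto_atTop_mono (fun n => by simp; omega) tendsto_id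
  have hA : Tendsto (fun n : ℕ => stirlingSeq (2*n) / stirlingSeq n ^ 2) atTop
      (nhds (Real.sqrt π / Real.sqrt π ^ 2)) :=
    (tendsto_stirlingSeq_sqrt_pi.comp h2n).div (tendsto_stirlingSeq_sqrt_pi.pow 2) (by positivity)
  have heq : Real.sqrt π / Real.sqrt π ^ 2 = 1 / Real.sqrt π := by
    rw [pow_two]
    rw [div_mul_eq_div_div, div_self (by positivity)]
  rw [heq] at hA
  apply hA.congr'
  filter_upwards [eventually_ge_atTop 1] with n hn
  exact (stirlingSeq_eq n hn).symm


-- monotonicity helpers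
lemma choose_succ_le_of (n k : ℕ) (h : n ≤ 2*k+1) : n.choose (k+1) ≤ n.choose k := by
  have hid := Nat.choose_succ_right_eq n k
  have h2 : n - k ≤ k + 1 := by omega
  have : n.choose (k+1) * (k+1) ≤ n.choose k * (k+1) := by
    rw [hid]
    exact Nat.mul_le_mul_left _ h2
  exact Nat.le_of_mul_le_mul_right this (by omega)

lemma two_mul_choose_le (t k : ℕ) (ht : 1 ≤ t) (hk : t ≤ k) :
    2 * ((2*t-1).choose k) ≤ (2*t).choose k := by
  have hk1 : 1 ≤ k := le_trans ht hk
  have hp : (2*t).choose k = (2*t-1).choose (k-1) + (2*t-1).choose k := by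
    have := Nat.choose_succ_succ (2*t-1) (k-1)
    rw [show (2*t-1).succ = 2*t by omega, show (k-1).succ = k by omega] at this
    exact this
  have hd : (2*t-1).choose k ≤ (2*t-1).choose (k-1) := by
    have := choose_succ_le_of (2*t-1) (k-1) (by omega)
    rwa [show k - 1 + 1 = k by omega] at this
  omega

lemma L_le_sum (t : ℕ) (ht : 1 ≤ t) :
    ∑ j ∈ Finset.range (2*t), ((2*t-1).choose j : ℝ)^2 * ((2*t).choose j : ℝ)
      ≤ (1/2) * ∑ u ∈ Finset.range t, ((2*t).choose (t+u) : ℝ)^3 := by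
  have key : ∀ u < t,
      ((2*t-1).choose (t+u) : ℝ)^2 * ((2*t).choose (t+u) : ℝ) ≤ (1/4) * ((2*t).choose (t+u) : ℝ)^3
      ∧ ((2*t-1).choose (t-1-u) : ℝ)^2 * ((2*t).choose (t-1-u) : ℝ)
          ≤ (1/4) * ((2*t).choose (t+u) : ℝ)^3 := by
    intro u hu
    have hhalf : ((2*t-1).choose (t+u) : ℝ) ≤ ((2*t).choose (t+u) : ℝ) / 2 := by
      have := two_mul_choose_le t (t+u) ht (by omega)
      have := (Nat.cast_le (α := ℝ)).2 this
      push_cast at this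
      linarith
    have hD0 : (0:ℝ) ≤ ((2*t).choose (t+u) : ℝ) := by positivity
    constructor
    · have h2 : ((2*t-1).choose (t+u) : ℝ)^2 ≤ (((2*t).choose (t+u) : ℝ)/2)^2 := by
        apply pow_le_pow_left₀ (by positivity) hhalf
      calc ((2*t-1).choose (t+u) : ℝ)^2 * ((2*t).choose (t+u) : ℝ)
          ≤ (((2*t).choose (t+u) : ℝ)/2)^2 * ((2*t).choose (t+u) : ℝ) :=
            mul_le_mul_of_nonneg_right h2 hD0
        _ = (1/4) * ((2*t).choose (t+u) : ℝ)^3 := by ring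
    · have hs1 : (2*t-1).choose (t-1-u) = (2*t-1).choose (t+u) := by
        have := Nat.choose_symm (n := 2*t-1) (k := t+u) (by omega)
        rwa [show 2*t-1 - (t+u) = t-1-u by omega] at this
      have hs2 : (2*t).choose (t-1-u) = (2*t).choose (t+u+1) := by
        have := Nat.choose_symm (n := 2*t) (k := t+u+1) (by omega)
        rwa [show 2*t - (t+u+1) = t-1-u by omega] at this
      have hs3 : (2*t).choose (t+u+1) ≤ (2*t).choose (t+u) :=
        choose_succ_le_of (2*t) (t+u) (by omega)
      have h2 : ((2*t-1).choose (t-1-u) : ℝ)^2 ≤ (((2*t).choose (t+u) : ℝ)/2)^2 := by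
        rw [hs1]
        apply pow_le_pow_left₀ (by positivity) hhalf
      have h3 : ((2*t).choose (t-1-u) : ℝ) ≤ ((2*t).choose (t+u) : ℝ) := by
        rw [hs2]; exact_mod_cast hs3
      calc ((2*t-1).choose (t-1-u) : ℝ)^2 * ((2*t).choose (t-1-u) : ℝ)
          ≤ (((2*t).choose (t+u) : ℝ)/2)^2 * ((2*t).choose (t+u) : ℝ) := by
            apply mul_le_mul h2 h3 (by positivity) (by positivity)
        _ = (1/4) * ((2*t).choose (t+u) : ℝ)^3 := by ring
  set f : ℕ → ℝ := fun j => ((2*t-1).choose j : ℝ)^2 * ((2*t).choose j : ℝ) with hf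
  have hsplit : ∑ j ∈ Finset.range (2*t), f j
      = ∑ j ∈ Finset.range t, f j + ∑ u ∈ Finset.range t, f (t+u) := by
    rw [Finset.range_eq_Ico, ← Finset.sum_Ico_consecutive f (by omega : 0 ≤ t) (by omega : t ≤ 2*t),
      ← Finset.range_eq_Ico, Finset.sum_Ico_eq_sum_range]
    congr 1
    · simp [show 2*t - t = t by omega]
  have hrefl : ∑ j ∈ Finset.range t, f j = ∑ u ∈ Finset.range t, f (t-1-u) :=
    (Finset.sum_range_reflect f t).symm
  rw [hsplit, hrefl]
  have hb1 : ∑ u ∈ Finset.range t, f (t-1-u)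
      ≤ ∑ u ∈ Finset.range t, (1/4) * ((2*t).choose (t+u) : ℝ)^3 := by
    apply Finset.sum_le_sum
    intro u hu
    exact (key u (Finset.mem_range.1 hu)).2
  have hb2 : ∑ u ∈ Finset.range t, f (t+u)
      ≤ ∑ u ∈ Finset.range t, (1/4) * ((2*t).choose (t+u) : ℝ)^3 := by
    apply Finset.sum_le_sum
    intro u hu
    exact (key u (Finset.mem_range.1 hu)).1
  have := add_le_add hb1 hb2
  calc _ ≤ _ := this
  _ = ∑ u ∈ Finset.range t, (1/2) * ((2*t).choose (t+u) : ℝ)^3 := by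
      rw [← Finset.sum_add_distrib]
      exact Finset.sum_congr rfl (fun u _ => by ring)
  _ = (1/2) * ∑ u ∈ Finset.range t, ((2*t).choose (t+u) : ℝ)^3 := by
      rw [Finset.mul_sum]


-- head: sum of gaussian ≤ 1 + half integral
lemma gauss_sum_le (b : ℝ) (hb : 0 < b) (w : ℕ) :
    ∑ u ∈ Finset.range (w+1), Real.exp (-b * (u:ℝ)^2) ≤ 1 + Real.sqrt (π / b) / 2 := by
  rw [Finset.sum_range_succ']
  have h0 : Real.exp (-b * ((0:ℕ):ℝ)^2) = 1 := by norm_num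
  rw [h0]
  have hanti : AntitoneOn (fun x : ℝ => Real.exp (-b * x^2)) (Icc (0:ℝ) ((0:ℝ) + w)) := by
    intro x hx y hy hxy
    simp only
    apply Real.exp_le_exp.2
    have hx0 : 0 ≤ x := hx.1
    have hsq : x^2 ≤ y^2 := by nlinarith
    nlinarith [mul_le_mul_of_nonneg_left hsq hb.le]
  have hsum := hanti.sum_le_integral
  have hint : (∫ x in (0:ℝ)..((0:ℝ) + w), Real.exp (-b * x^2)) ≤ Real.sqrt (π / b) / 2 := by
    rw [← integral_gaussian_Ioi b]
    rw [zero_add, intervalIntegral.integral_of_le (by positivity : (0:ℝ) ≤ (w:ℝ))]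
    apply setIntegral_mono_set ((integrable_exp_neg_mul_sq hb).integrableOn)
    · filter_upwards with x using (Real.exp_pos _).le
    · filter_upwards with x hx using hx.1
  have hterm : ∑ i ∈ Finset.range w, Real.exp (-b * ((i+1:ℕ):ℝ)^2)
      = ∑ i ∈ Finset.range w, (fun x : ℝ => Real.exp (-b * x^2)) ((0:ℝ) + ((i+1:ℕ):ℝ)) := by
    apply Finset.sum_congr rfl
    intro i _
    norm_num
  calc ∑ i ∈ Finset.range w, Real.exp (-b * ((i+1:ℕ):ℝ)^2) + 1
      ≤ Real.sqrt (π / b) / 2 + 1 := by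
        rw [hterm]
        have := hsum.trans hint
        linarith
    _ = 1 + Real.sqrt (π / b) / 2 := by ring


lemma tail_tendsto : Tendsto (fun t : ℕ => (t:ℝ) * Real.exp (-(3/20000) * t)) atTop (nhds 0) := by
  have h1 : Tendsto (fun x : ℝ => x * Real.exp (-x)) atTop (nhds 0) := by
    simpa using tendsto_pow_mul_exp_neg_atTop_nhds_zero 1
  have h2 : Tendsto (fun t : ℕ => (3/20000 : ℝ) * t) atTop atTop :=
    (tendsto_natCast_atTop_atTop).const_mul_atTop (by norm_num)
  have h4 := (h1.comp h2).const_mul (20000/3 : ℝ)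
  rw [mul_zero] at h4
  apply h4.congr
  intro t
  simp only [Function.comp_apply]
  field_simp

lemma G_le : ∀ᶠ t : ℕ in atTop,
    ∑ u ∈ Finset.range t, Real.exp (-(3 * (u:ℝ)^2) / ((t:ℝ) + u)) ≤ 0.52 * Real.sqrt t := by
  have hev1 : ∀ᶠ t : ℕ in atTop, (t:ℝ) * Real.exp (-(3/20000) * t) ≤ 1 :=
    tail_tendsto.eventually (eventually_le_nhds (by norm_num : (0:ℝ) < 1))
  filter_upwards [hev1, eventually_ge_atTop 160000] with t htail ht0
  have ht1 : (1:ℕ) ≤ t := by omega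
  have htR : (160000:ℝ) ≤ t := by exact_mod_cast ht0
  have htpos : (0:ℝ) < t := by linarith
  set w : ℕ := t / 100 with hw
  have hw1 : w + 1 ≤ t := by omega
  have hwle : (w:ℝ) ≤ (t:ℝ)/100 := by
    have h : (w * 100 : ℕ) ≤ t := by omega
    have := (Nat.cast_le (α := ℝ)).2 h
    push_cast at this
    linarith
  have hwgt : (t:ℝ) < 100 * ((w:ℝ) + 1) := by
    have h : t < 100 * (w + 1) := by omega
    exact_mod_cast h
  rw [Finset.range_eq_Ico, ← Finset.sum_Ico_consecutive _ (Nat.zero_le (w+1)) hw1]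
  set b : ℝ := 300 / (101 * t) with hb
  have hbpos : 0 < b := by positivity
  -- head
  have hhead : ∑ u ∈ Finset.Ico 0 (w+1), Real.exp (-(3 * (u:ℝ)^2) / ((t:ℝ) + u))
      ≤ 1 + Real.sqrt (π / b) / 2 := by
    refine le_trans ?_ (gauss_sum_le b hbpos w)
    rw [← Finset.range_eq_Ico]
    apply Finset.sum_le_sum
    intro u hu
    have huw : u ≤ w := by have := Finset.mem_range.1 hu; omega
    have huR : (u:ℝ) ≤ w := by exact_mod_cast huw
    apply Real.exp_le_exp.2
    have htu : (0:ℝ) < (t:ℝ) + u := by positivity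
    have hkey : b * ((t:ℝ) + u) ≤ 3 := by
      rw [hb]
      rw [div_mul_eq_mul_div, div_le_iff₀ (by positivity : (0:ℝ) < 101 * t)]
      have h100 : 100 * (u:ℝ) ≤ t := by
        have : (w:ℝ) * 100 ≤ t := by
          have h : (w * 100 : ℕ) ≤ t := by omega
          exact_mod_cast h
        nlinarith
      nlinarith
    have h2 : b * (u:ℝ)^2 ≤ 3 * (u:ℝ)^2 / ((t:ℝ) + u) := by
      rw [le_div_iff₀ htu]
      nlinarith [sq_nonneg (u:ℝ)]
    calc -(3 * (u:ℝ)^2) / ((t:ℝ) + u) = -(3 * (u:ℝ)^2 / ((t:ℝ) + u)) := by rw [neg_div]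
      _ ≤ -(b * (u:ℝ)^2) := neg_le_neg h2
      _ = -b * (u:ℝ)^2 := by ring
  -- tail
  have htail2 : ∑ u ∈ Finset.Ico (w+1) t, Real.exp (-(3 * (u:ℝ)^2) / ((t:ℝ) + u))
      ≤ (t:ℝ) * Real.exp (-(3/20000) * t) := by
    have hterm : ∀ u ∈ Finset.Ico (w+1) t,
        Real.exp (-(3 * (u:ℝ)^2) / ((t:ℝ) + u)) ≤ Real.exp (-(3/20000) * t) := by
      intro u hu
      obtain ⟨hu1, hu2⟩ := Finset.mem_Ico.1 hu
      have huR1 : (t:ℝ) < 100 * u := by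
        have : (w:ℝ) + 1 ≤ u := by exact_mod_cast hu1
        linarith
      have huR2 : (u:ℝ) ≤ t := by
        have : u ≤ t := le_of_lt hu2
        exact_mod_cast this
      apply Real.exp_le_exp.2
      have htu : (0:ℝ) < (t:ℝ) + u := by positivity
      rw [neg_div, neg_mul, neg_le_neg_iff, le_div_iff₀ htu]
      nlinarith
    calc ∑ u ∈ Finset.Ico (w+1) t, Real.exp (-(3 * (u:ℝ)^2) / ((t:ℝ) + u))
        ≤ ∑ u ∈ Finset.Ico (w+1) t, Real.exp (-(3/20000) * t) := Finset.sum_le_sum hterm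
      _ = ((t - (w+1) : ℕ) : ℝ) * Real.exp (-(3/20000) * t) := by
          rw [Finset.sum_const, Nat.card_Ico]
          simp [nsmul_eq_mul]
      _ ≤ (t:ℝ) * Real.exp (-(3/20000) * t) := by
          apply mul_le_mul_of_nonneg_right _ (Real.exp_pos _).le
          have : t - (w+1) ≤ t := by omega
          exact_mod_cast this
  -- sqrt bound
  have hsqrtb : Real.sqrt (π / b) / 2 ≤ 0.515 * Real.sqrt t := by
    have hpb : π / b = (π * 101 / 300) * t := by
      rw [hb]
      field_simp
    rw [hpb, Real.sqrt_mul (by positivity : (0:ℝ) ≤ π * 101 / 300)]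
    have h1 : Real.sqrt (π * 101 / 300) ≤ 1.03 := by
      have h2 : π * 101 / 300 ≤ (1.03:ℝ)^2 := by
        nlinarith [Real.pi_lt_d2]
      calc Real.sqrt (π * 101 / 300) ≤ Real.sqrt ((1.03:ℝ)^2) := Real.sqrt_le_sqrt h2
        _ = 1.03 := Real.sqrt_sq (by norm_num)
    have hst : (0:ℝ) ≤ Real.sqrt t := Real.sqrt_nonneg _
    nlinarith
  have hsqrt400 : (400:ℝ) ≤ Real.sqrt t := by
    have : ((400:ℝ))^2 ≤ t := by norm_num; linarith
    nlinarith [Real.sq_sqrt htpos.le, Real.sqrt_nonneg (t:ℝ)]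
  calc ∑ u ∈ Finset.Ico 0 (w+1), Real.exp (-(3 * (u:ℝ)^2) / ((t:ℝ) + u))
        + ∑ u ∈ Finset.Ico (w+1) t, Real.exp (-(3 * (u:ℝ)^2) / ((t:ℝ) + u))
      ≤ (1 + Real.sqrt (π / b) / 2) + (t:ℝ) * Real.exp (-(3/20000) * t) :=
        add_le_add hhead htail2
    _ ≤ 1 + 0.515 * Real.sqrt t + 1 := by linarith
    _ ≤ 0.52 * Real.sqrt t := by nlinarith


lemma sqrt_pi_gt : (1.772:ℝ) < Real.sqrt π := by
  have h : (1.772:ℝ)^2 < π := by nlinarith [Real.pi_gt_d6]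
  nlinarith [Real.sq_sqrt Real.pi_pos.le, Real.sqrt_nonneg π, h]

lemma cb_upper : ∀ᶠ t : ℕ in atTop,
    (Nat.centralBinom t : ℝ) * Real.sqrt t ≤ (1.01 / Real.sqrt π) * 4 ^ t := by
  have hs : (0:ℝ) < Real.sqrt π := Real.sqrt_pos.2 Real.pi_pos
  have hlt : (1:ℝ) / Real.sqrt π < 1.01 / Real.sqrt π := by
    apply div_lt_div_of_pos_right (by norm_num) hs
  filter_upwards [cb_tendsto.eventually (eventually_le_nhds hlt)] with t ht
  have h4 : (0:ℝ) < 4 ^ t := by positivity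
  rw [div_le_iff₀ h4] at ht
  linarith [ht]

lemma cb_lower : ∀ᶠ t : ℕ in atTop,
    (0.99 / Real.sqrt π) * 4 ^ t ≤ (Nat.centralBinom t : ℝ) * Real.sqrt t := by
  have hs : (0:ℝ) < Real.sqrt π := Real.sqrt_pos.2 Real.pi_pos
  have hlt : (0.99:ℝ) / Real.sqrt π < 1 / Real.sqrt π := by
    apply div_lt_div_of_pos_right (by norm_num) hs
  filter_upwards [cb_tendsto.eventually (eventually_ge_nhds hlt)] with t ht
  have h4 : (0:ℝ) < 4 ^ t := by positivity
  rw [le_div_iff₀ h4] at ht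
  linarith [ht]

lemma L_ev : ∀ᶠ t : ℕ in atTop,
    ∑ j ∈ Finset.range (2*t), ((2*t-1).choose j : ℝ)^2 * ((2*t).choose j : ℝ)
      ≤ 0.05 * 64^t / t := by
  have hs : (0:ℝ) < Real.sqrt π := Real.sqrt_pos.2 Real.pi_pos
  filter_upwards [G_le, cb_upper, eventually_ge_atTop 1] with t hG hC ht1
  have ht1' : (1:ℝ) ≤ t := by exact_mod_cast ht1
  have htpos : (0:ℝ) < t := by linarith
  have hst : (0:ℝ) < Real.sqrt t := Real.sqrt_pos.2 htpos
  set C : ℝ := ((2*t).choose t : ℝ) with hCdef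
  have hC0 : (0:ℝ) ≤ C := by positivity
  -- sum of cubes bound
  have hcube : ∑ u ∈ Finset.range t, ((2*t).choose (t+u) : ℝ)^3
      ≤ C^3 * ∑ u ∈ Finset.range t, Real.exp (-(3 * (u:ℝ)^2) / ((t:ℝ) + u)) := by
    rw [Finset.mul_sum]
    apply Finset.sum_le_sum
    intro u hu
    have huT : u ≤ t := le_of_lt (Finset.mem_range.1 hu)
    have h1 := choose_le_exp t u ht1 huT
    have h2 : (0:ℝ) ≤ ((2*t).choose (t+u) : ℝ) := by positivity
    have h3 : ((2*t).choose (t+u) : ℝ)^3 ≤ (C * Real.exp (-(u:ℝ)^2 / ((t:ℝ)+u)))^3 :=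
      pow_le_pow_left₀ h2 h1 3
    refine h3.trans (le_of_eq ?_)
    rw [mul_pow, ← Real.exp_nat_mul]
    congr 2
    push_cast
    ring
  have hGpos : (0:ℝ) ≤ ∑ u ∈ Finset.range t, Real.exp (-(3 * (u:ℝ)^2) / ((t:ℝ) + u)) :=
    Finset.sum_nonneg (fun u _ => (Real.exp_pos _).le)
  have main : ∑ j ∈ Finset.range (2*t), ((2*t-1).choose j : ℝ)^2 * ((2*t).choose j : ℝ)
      ≤ 0.26 * C^3 * Real.sqrt t := by
    calc ∑ j ∈ Finset.range (2*t), ((2*t-1).choose j : ℝ)^2 * ((2*t).choose j : ℝ)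
        ≤ (1/2) * ∑ u ∈ Finset.range t, ((2*t).choose (t+u) : ℝ)^3 := L_le_sum t ht1
      _ ≤ (1/2) * (C^3 * (0.52 * Real.sqrt t)) := by
          apply mul_le_mul_of_nonneg_left _ (by norm_num)
          refine hcube.trans ?_
          exact mul_le_mul_of_nonneg_left hG (by positivity)
      _ = 0.26 * C^3 * Real.sqrt t := by ring
  -- C³ √t t = (C √t)³
  have h3s : Real.sqrt t ^ 3 = t * Real.sqrt t := by
    rw [pow_succ, Real.sq_sqrt htpos.le]
  have hcsq : C^3 * Real.sqrt t * t = (C * Real.sqrt t)^3 := by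
    rw [mul_pow, h3s]
    ring
  have hCb : (C * Real.sqrt t)^3 ≤ ((1.01 / Real.sqrt π) * 4 ^ t)^3 := by
    apply pow_le_pow_left₀ (by positivity) _ 3
    exact hC
  have hpow : ((1.01 / Real.sqrt π) * 4 ^ t)^3 = (1.01^3 / (π * Real.sqrt π)) * 64 ^ t := by
    have h1 : ((4:ℝ) ^ t)^3 = 64 ^ t := by
      rw [← pow_mul, pow_mul']
      norm_num
    rw [mul_pow, h1, div_pow]
    congr 2
    rw [pow_succ, pow_two, Real.mul_self_sqrt Real.pi_pos.le]
  -- final numeric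
  have hnum : (1.01:ℝ)^3 / (π * Real.sqrt π) * 0.26 ≤ 0.05 := by
    have h1 : (5.56:ℝ) ≤ π * Real.sqrt π := by
      nlinarith [sqrt_pi_gt, Real.pi_gt_d6, Real.sqrt_nonneg π]
    rw [div_mul_eq_mul_div, div_le_iff₀ (by positivity)]
    nlinarith
  rw [le_div_iff₀ htpos]
  calc (∑ j ∈ Finset.range (2*t), ((2*t-1).choose j : ℝ)^2 * ((2*t).choose j : ℝ)) * t
      ≤ (0.26 * C^3 * Real.sqrt t) * t := by
        apply mul_le_mul_of_nonneg_right main htpos.le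
    _ = 0.26 * (C^3 * Real.sqrt t * t) := by ring
    _ = 0.26 * (C * Real.sqrt t)^3 := by rw [hcsq]
    _ ≤ 0.26 * ((1.01 / Real.sqrt π) * 4 ^ t)^3 := by
        apply mul_le_mul_of_nonneg_left hCb (by norm_num)
    _ = (1.01^3 / (π * Real.sqrt π) * 0.26) * 64 ^ t := by rw [hpow]; ring
    _ ≤ 0.05 * 64 ^ t := by
        apply mul_le_mul_of_nonneg_right hnum (by positivity)


-- 2 * C(2k-1, k) = centralBinom k   for k ≥ 1
lemma two_choose_pred (k : ℕ) (hk : 1 ≤ k) :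
    2 * ((2*k-1).choose k) = Nat.centralBinom k := by
  have hp : (2*k).choose k = (2*k-1).choose (k-1) + (2*k-1).choose k := by
    have := Nat.choose_succ_succ (2*k-1) (k-1)
    rw [show (2*k-1).succ = 2*k by omega, show (k-1).succ = k by omega] at this
    exact this
  have hs : (2*k-1).choose (k-1) = (2*k-1).choose k := by
    have := Nat.choose_symm (n := 2*k-1) (k := k) (by omega)
    rwa [show 2*k-1-k = k-1 by omega] at this
  rw [Nat.centralBinom, hp, hs]
  ring

lemma cb_sq_lower (M : ℕ)
    (h : (0.99 / Real.sqrt π) * 4 ^ M ≤ (Nat.centralBinom M : ℝ) * Real.sqrt M) :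
    (0.9801 / π) * 16 ^ M ≤ ((Nat.centralBinom M : ℝ))^2 * M := by
  have hsq := pow_le_pow_left₀ (by positivity) h 2
  have h1 : ((Nat.centralBinom M : ℝ) * Real.sqrt M)^2 = ((Nat.centralBinom M : ℝ))^2 * M := by
    rw [mul_pow, Real.sq_sqrt (by positivity : (0:ℝ) ≤ (M:ℝ))]
  have h2 : ((0.99 / Real.sqrt π) * 4 ^ M)^2 = (0.9801/π) * 16^M := by
    rw [mul_pow, div_pow, Real.sq_sqrt Real.pi_pos.le, ← pow_mul, mul_comm M 2, pow_mul]
    norm_num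
  rw [h1, h2] at hsq
  exact hsq

lemma R_ev : ∀ᶠ t : ℕ in atTop,
    0.0512 * 64^t / t ≤ (((3*t-1).choose ((3*t)/2) : ℝ))^2 := by
  obtain ⟨N, hN⟩ := eventually_atTop.1 cb_lower
  filter_upwards [eventually_ge_atTop (N+1), eventually_ge_atTop 1] with t htN ht1
  have htpos : (0:ℝ) < t := by positivity
  rcases Nat.even_or_odd t with he | ho
  · -- even : t = 2s
    obtain ⟨s, hs⟩ := he
    have hs2 : t = 2*s := by omega
    have hs1 : 1 ≤ s := by omega
    have hidx : (3*t)/2 = 3*s := by omega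
    have hsub : 3*t-1 = 2*(3*s)-1 := by omega
    rw [hidx, hsub]
    have hch : ((2*(3*s)-1).choose (3*s) : ℝ) = (Nat.centralBinom (3*s) : ℝ)/2 := by
      have := two_choose_pred (3*s) (by omega)
      have := congrArg (fun x : ℕ => (x:ℝ)) this
      push_cast at this
      linarith
    rw [hch]
    have hlow := cb_sq_lower (3*s) (hN (3*s) (by omega))
    have hMpos : (0:ℝ) < (3*s : ℕ) := by positivity
    have hpow : (16:ℝ)^(3*s) = 64^t := by
      rw [hs2, show (16:ℝ) = 2^4 by norm_num, show (64:ℝ) = 2^6 by norm_num,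
        ← pow_mul, ← pow_mul]
      ring_nf
    have hc2 : (0.9801/π) * 64^t ≤ ((Nat.centralBinom (3*s) : ℝ))^2 * (3*s) := by
      rw [← hpow]
      convert hlow using 2
      push_cast
      ring
    have h64 : (0:ℝ) < 64^t := by positivity
    have hπ := Real.pi_gt_d6
    have hπ2 := Real.pi_lt_d2
    have hcbpos : (0:ℝ) ≤ (Nat.centralBinom (3*s) : ℝ) := by positivity
    have hsR : (0:ℝ) < (s:ℝ) := by exact_mod_cast hs1
    have htsR : (t:ℝ) = 2*s := by exact_mod_cast hs2
    rw [div_le_iff₀ htpos]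
    have expand : ((Nat.centralBinom (3*s) : ℝ)/2)^2 = ((Nat.centralBinom (3*s) : ℝ))^2/4 := by ring
    rw [expand]
    rw [div_mul_eq_mul_div, div_le_iff₀ Real.pi_pos] at hc2
    -- hc2 : 0.9801 * 64^t ≤ cb^2 * (3*s) * π
    have hcbs : (0:ℝ) ≤ ((Nat.centralBinom (3*s) : ℝ))^2 * (3*(s:ℝ)) := by positivity
    have hπb : ((Nat.centralBinom (3*s) : ℝ))^2 * (3*(s:ℝ)) * π
        ≤ ((Nat.centralBinom (3*s) : ℝ))^2 * (3*(s:ℝ)) * 3.15 :=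
      mul_le_mul_of_nonneg_left hπ2.le hcbs
    nlinarith [hc2, hπb]
  · -- odd : t = 2s+1
    obtain ⟨s, hs⟩ := ho
    have hidx : (3*t)/2 = 3*s+1 := by omega
    have hsub : 3*t-1 = 2*(3*s+1) := by omega
    rw [hidx, hsub]
    have hch : ((2*(3*s+1)).choose (3*s+1) : ℝ) = (Nat.centralBinom (3*s+1) : ℝ) := by
      rw [Nat.centralBinom]
    rw [hch]
    set M := 3*s+1 with hM
    have hlow := cb_sq_lower M (hN M (by omega))
    have hpow : (16:ℝ)^M = 64^t/4 := by
      rw [hs, hM, show (16:ℝ) = 2^4 by norm_num, show (64:ℝ) = 2^6 by norm_num, ← pow_mul, ← pow_mul]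
      rw [show 4*(3*s+1) = 12*s+4 by ring, show 6*(2*s+1) = 12*s+6 by ring]
      rw [pow_add, pow_add]
      ring
    have hMR : ((M:ℕ):ℝ) = 3*(s:ℝ)+1 := by rw [hM]; push_cast; ring
    rw [hpow, hMR] at hlow
    have h64 : (0:ℝ) < 64^t := by positivity
    have hπ := Real.pi_gt_d6
    have hπ2 := Real.pi_lt_d2
    have hsR : (0:ℝ) ≤ (s:ℝ) := by positivity
    have htsR : (t:ℝ) = 2*(s:ℝ)+1 := by rw [hs]; push_cast; ring
    rw [div_le_iff₀ htpos]
    rw [div_mul_eq_mul_div, div_le_iff₀ Real.pi_pos] at hlow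
    have hcbs : (0:ℝ) ≤ ((Nat.centralBinom M : ℝ))^2 * (3*(s:ℝ)+1) := by positivity
    have hπb : ((Nat.centralBinom M : ℝ))^2 * (3*(s:ℝ)+1) * π
        ≤ ((Nat.centralBinom M : ℝ))^2 * (3*(s:ℝ)+1) * 3.15 :=
      mul_le_mul_of_nonneg_left hπ2.le hcbs
    nlinarith [hlow, hπb, sq_nonneg (Nat.centralBinom M : ℝ)]


lemma cov_third (t : ℕ) (ht : 1 ≤ t) :
    Cov (6*t) (2*t) = (2:ℝ)⁻¹^(6*t) *
      ∑ j ∈ Finset.range (2*t), ((2*t-1).choose j : ℝ)^2 * ((2*t).choose j : ℝ) := by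
  rw [Cov]
  congr 1
  apply Finset.sum_congr rfl
  intro j hj
  have hj2 : j < 2*t := Finset.mem_range.1 hj
  congr 1
  have h1 : 6*t - 2*(2*t) = 2*t := by omega
  have h2 : ((6*t : ℕ) : ℤ) - ((2*t : ℕ) : ℤ) = 2 * ((2*t : ℕ) : ℤ) := by push_cast; ring
  rw [h1, h2, Int.mul_ediv_cancel_left _ (by norm_num)]
  have hpos : (0:ℤ) ≤ ((2*t : ℕ) : ℤ) - (j:ℤ) := by
    have : (j:ℤ) < ((2*t:ℕ):ℤ) := by exact_mod_cast hj2
    omega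
  rw [ibinom, if_pos hpos]
  have htn : (((2*t : ℕ) : ℤ) - (j:ℤ)).toNat = 2*t - j := by omega
  rw [htn, Nat.choose_symm (le_of_lt hj2)]

lemma cov_half (t : ℕ) (ht : 1 ≤ t) :
    Cov (6*t) (3*t) = (2:ℝ)⁻¹^(6*t) * ((3*t-1).choose ((3*t)/2) : ℝ)^2 := by
  rw [Cov]
  congr 1
  have h1 : 6*t - 2*(3*t) = 0 := by omega
  have hkey : ∀ j : ℕ, (ibinom 0 ((((6*t:ℕ):ℤ) - ((3*t:ℕ):ℤ))/2 - j) : ℝ)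
      = if j = (3*t)/2 then 1 else 0 := by
    intro j
    have h2 : (((6*t:ℕ):ℤ) - ((3*t:ℕ):ℤ))/2 = (((3*t)/2 : ℕ) : ℤ) := by
      omega
    rw [h2, ibinom]
    by_cases hj : j = (3*t)/2
    · subst hj
      rw [if_pos (by omega), show ((((3*t)/2 : ℕ):ℤ) - (((3*t)/2 : ℕ):ℤ)).toNat = 0 by omega]
      simp
    · have hne : (((3*t)/2 : ℕ) : ℤ) - (j:ℤ) ≠ 0 := by
        intro h
        apply hj
        omega
      rcases lt_or_ge ((((3*t)/2 : ℕ) : ℤ) - (j:ℤ)) 0 with h | h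
      · rw [if_neg (not_le.2 h)]
        simp [hj]
      · rw [if_pos h]
        have h3 : 0 < ((((3*t)/2 : ℕ) : ℤ) - (j:ℤ)).toNat := by omega
        obtain ⟨k, hk⟩ := Nat.exists_eq_succ_of_ne_zero (Nat.pos_iff_ne_zero.1 h3)
        rw [hk, Nat.choose_zero_succ]
        simp [hj]
  rw [h1]
  calc ∑ j ∈ Finset.range (3*t), ((3*t-1).choose j : ℝ)^2 *
        (ibinom 0 ((((6*t:ℕ):ℤ) - ((3*t:ℕ):ℤ))/2 - j) : ℝ)
      = ∑ j ∈ Finset.range (3*t), (if j = (3*t)/2 then ((3*t-1).choose j : ℝ)^2 else 0) := by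
        apply Finset.sum_congr rfl
        intro j _
        rw [hkey j]
        by_cases hj : j = (3*t)/2 <;> simp [hj]
    _ = ((3*t-1).choose ((3*t)/2) : ℝ)^2 := by
        rw [Finset.sum_ite_eq' (Finset.range (3*t)) ((3*t)/2) (fun j => ((3*t-1).choose j : ℝ)^2)]
        rw [if_pos (Finset.mem_range.2 (by omega))]

/-- **Endpoint comparison `k = 3` versus `k = 2`.**
For all sufficiently large `n` divisible by `6`, `Cov(n, n/3) < Cov(n, n/2)`. -/
theorem cov_third_lt_half :
    ∃ N : ℕ, ∀ n : ℕ, N ≤ n → 6 ∣ n → Cov n (n / 3) < Cov n (n / 2) := by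
  obtain ⟨N₀, hmain⟩ := eventually_atTop.1 (L_ev.and R_ev)
  refine ⟨6*(N₀+1), fun n hn hdvd => ?_⟩
  obtain ⟨t, rfl⟩ := hdvd
  have ht1 : 1 ≤ t := by omega
  have htN : N₀ ≤ t := by omega
  obtain ⟨hL, hR⟩ := hmain t htN
  have h3 : 6*t/3 = 2*t := by omega
  have h2 : 6*t/2 = 3*t := by omega
  rw [h3, h2, cov_third t ht1, cov_half t ht1]
  apply mul_lt_mul_of_pos_left _ (by positivity)
  have htpos : (0:ℝ) < t := by
    have : (1:ℝ) ≤ t := by exact_mod_cast ht1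
    linarith
  calc ∑ j ∈ Finset.range (2*t), ((2*t-1).choose j : ℝ)^2 * ((2*t).choose j : ℝ)
      ≤ 0.05 * 64^t / t := hL
    _ < 0.0512 * 64^t / t := by
        rw [div_lt_div_iff₀ htpos htpos]
        have h64 : (0:ℝ) < 64^t := by positivity
        nlinarith
    _ ≤ ((3*t-1).choose ((3*t)/2) : ℝ)^2 := hR

end CovProofAux
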